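/- Let L/F be a field extension of degree m, s : L → F a nonzero F-linear map, α an F-basis of L with dual basis α′ with respect to b_s(x,y) = s(xy). Let B ∈ M_n(F) be an invertible symmetric matrix, and define φ_B(c,c′) = c B (c′)ᵗ on Lⁿ and ψ_B(M,N) = tr(M B Nᵗ) on M_{m×n}(F). Then for all c, c′ ∈ Lⁿ, s(φ_B(c,c′)) = ψ_B(M_α(c), M_{α′}(c′)), and for every L-subspace C ⊆ Lⁿ, M_{α′}(C^{⊥_{φ_B}}) = (M_α(C))^{⊥_{ψ_B}}. -/

import Mathlib

open Matrix

/-- Duality transfer: with dual bases `b, b'` with respect to `bₛ(x,y) = s(xy)` and an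
invertible symmetric `B ∈ M_n(F)`, one has `s(φ_B(c,c')) = ψ_B(M_b(c), M_{b'}(c'))`,
and `M_{b'}(C^{⊥_{φ_B}}) = (M_b(C))^{⊥_{ψ_B}}` for every subspace `C ⊆ Lⁿ`. -/
theorem stmt_16 (F L : Type*) [Field F] [Field L] [Algebra F L] [FiniteDimensional F L]
    (m n : ℕ) (hm : Module.finrank F L = m)
    (s : L →ₗ[F] F) (hs : s ≠ 0)
    (b b' : Module.Basis (Fin m) F L)
    (hdual : ∀ i j, s (b i * b' j) = if i = j then 1 else 0)
    (B : Matrix (Fin n) (Fin n) F) (hBsymm : Bᵀ = B) (hB : IsUnit B) :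
    (∀ c c' : Fin n → L,
      s (∑ i, ∑ j, c i * algebraMap F L (B i j) * c' j)
        = Matrix.trace ((Matrix.of fun i j => b.repr (c j) i) * B *
            (Matrix.of fun i j => b'.repr (c' j) i)ᵀ)) ∧
    ∀ C : Submodule L (Fin n → L),
      (fun x : Fin n → L => Matrix.of fun i j => b'.repr (x j) i) ''
          {x | ∀ y ∈ C, ∑ i, ∑ j, x i * algebraMap F L (B i j) * y j = 0}
        = {N : Matrix (Fin m) (Fin n) F | ∀ y ∈ C,
            Matrix.trace (N * B * (Matrix.of fun i j => b.repr (y j) i)ᵀ) = 0} := by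
  -- the key multiplicative identity coming from the dual bases
  have key : ∀ x y : L, s (x * y) = ∑ k, b.repr x k * b'.repr y k := by
    intro x y
    conv_lhs => rw [← b.sum_repr x, ← b'.sum_repr y]
    rw [Finset.sum_mul_sum]
    simp only [map_sum, smul_mul_smul_comm, _root_.map_smul, smul_eq_mul, mul_ite, mul_one,
      mul_zero]
    simp [hdual, Finset.sum_ite_eq']
  -- symmetry of B entrywise
  have hBs : ∀ i j, B j i = B i j := fun i j => (congrFun (congrFun hBsymm i) j)
  -- Part 1
  have part1 : ∀ c c' : Fin n → L,
      s (∑ i, ∑ j, c i * algebraMap F L (B i j) * c' j)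
        = Matrix.trace ((Matrix.of fun i j => b.repr (c j) i) * B *
            (Matrix.of fun i j => b'.repr (c' j) i)ᵀ) := by
    intro c c'
    have halg : ∀ (a : F) (x : L), x * algebraMap F L a = a • x := fun a x => by
      rw [Algebra.smul_def, mul_comm]
    simp only [map_sum, key, halg, _root_.map_smul, Finsupp.smul_apply, smul_eq_mul]
    rw [Matrix.trace]
    simp only [Matrix.diag_apply, Matrix.mul_apply, Matrix.transpose_apply, Matrix.of_apply,
      Finset.sum_mul, Finset.mul_sum]
    conv_rhs => rw [Finset.sum_comm]
    conv_lhs => rw [Finset.sum_comm]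
    refine Finset.sum_congr rfl fun j _ => ?_
    rw [Finset.sum_comm]
    exact Finset.sum_congr rfl fun k _ => Finset.sum_congr rfl fun i _ => by ring
  -- symmetry of the bilinear form φ_B
  have phisymm : ∀ x y : Fin n → L,
      ∑ i, ∑ j, x i * algebraMap F L (B i j) * y j
        = ∑ i, ∑ j, y i * algebraMap F L (B i j) * x j := by
    intro x y
    rw [Finset.sum_comm]
    exact Finset.sum_congr rfl fun j _ => Finset.sum_congr rfl fun i _ => by
      rw [hBs j i]; ring
  -- symmetry of the trace form ψ_B
  have trsymm : ∀ M N : Matrix (Fin m) (Fin n) F,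
      Matrix.trace (M * B * Nᵀ) = Matrix.trace (N * B * Mᵀ) := by
    intro M N
    calc Matrix.trace (M * B * Nᵀ) = Matrix.trace ((M * B * Nᵀ)ᵀ) :=
          (Matrix.trace_transpose _).symm
      _ = Matrix.trace (N * B * Mᵀ) := by
          rw [Matrix.transpose_mul, Matrix.transpose_mul, Matrix.transpose_transpose, hBsymm,
            Matrix.mul_assoc]
  -- nondegeneracy of (x, y) ↦ s (x * y)
  have nondeg : ∀ z : L, (∀ l : L, s (l * z) = 0) → z = 0 := by
    intro z h
    by_contra hz
    apply hs
    ext w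
    simpa [mul_assoc, inv_mul_cancel₀ hz] using h (w * z⁻¹)
  refine ⟨part1, fun C => Set.Subset.antisymm ?_ ?_⟩
  · rintro _ ⟨x, hx, rfl⟩ y hy
    rw [trsymm, ← part1 y x, phisymm, hx y hy, map_zero]
  · intro N hN
    refine ⟨fun j => ∑ k, N k j • b' k, ?_, ?_⟩
    · intro y hy
      refine nondeg _ fun l => ?_
      have hNx : (Matrix.of fun i j => b'.repr ((fun j => ∑ k, N k j • b' k) j) i) = N := by
        ext i j
        simp [Finsupp.single_apply]
      have hl : l * (∑ i, ∑ j, (fun j => ∑ k, N k j • b' k) i * algebraMap F L (B i j) * y j)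
          = ∑ i, ∑ j, (fun j => ∑ k, N k j • b' k) i * algebraMap F L (B i j) * (l • y) j := by
        simp only [Finset.mul_sum, Pi.smul_apply, smul_eq_mul]
        exact Finset.sum_congr rfl fun i _ => Finset.sum_congr rfl fun j _ => by ring
      rw [hl, phisymm, part1 (l • y) _, hNx, trsymm]
      exact hN (l • y) (C.smul_mem l hy)
    · have hNx : (Matrix.of fun i j => b'.repr ((fun j => ∑ k, N k j • b' k) j) i) = N := by
        ext i j
        simp [Finsupp.single_apply]
      exact hNx
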